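/- (Success of the SRF decoder given S_E = {0}.) Assume B := d_f + d_g + t − L − 2 < 0. With notation as in the SRFwE setup, let E be the error matrix with error locator Λ (deg Λ ≤ t), Y = M/Λ, E'_i = E_i/Y ∈ F_q[x]/Λ, and suppose gcd(E'_1,…,E'_ℓ, Λ) = 1. If the only φ ∈ F_q[x]/Λ such that deg((g·φ·E'_i) rem Λ) ≤ B + deg Λ for all i is φ = 0, then every solution (φ, ψ_1, …, ψ_ℓ) of the key equations ψ_i ≡ φ R_i mod M with deg φ < d_g + t, deg ψ_i < d_f + t lies in (Λg, Λf_1, …, Λf_ℓ)·F_q[x]. -/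
import Mathlib

open Polynomial

/-- `DegLE r C` means `deg r ≤ C`, where `deg 0 = −∞` and `C : ℤ`. -/
def DegLE {F : Type*} [Field F] (r : Polynomial F) (C : ℤ) : Prop :=
  r.degree.map (Nat.cast : ℕ → ℤ) ≤ (C : WithBot ℤ)

private lemma mod_eq_of_dvd_sub' {F : Type*} [Field F] {Λ a ε : F[X]} (hΛ : Λ ≠ 0)
    (h : Λ ∣ a - ε) (hd : ε.degree < Λ.degree) : a % Λ = ε := by
  have h1 : Λ ∣ a - a % Λ := by
    have := EuclideanDomain.div_add_mod a Λ
    exact ⟨a / Λ, by linear_combination -this⟩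
  have h2 : Λ ∣ a % Λ - ε := by
    have := dvd_sub h h1
    simpa using this
  have h3 : (a % Λ - ε).degree < Λ.degree :=
    lt_of_le_of_lt (degree_sub_le _ _) (max_lt (EuclideanDomain.mod_lt _ hΛ) hd)
  exact sub_eq_zero.mp (Polynomial.eq_zero_of_dvd_of_degree_lt h2 h3)

/-- Success of the SRF decoder given `S_E = {0}`: with `B = d_f + d_g + t − L − 2 < 0`,
error locator `Λ` (`deg Λ ≤ t`), `Y = M/Λ` dividing each error interpolant `E_i`,
`gcd(E'_1,…,E'_ℓ,Λ) = 1`, and only `φ = 0` in `F_q[x]/Λ` satisfying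
`deg((gφE'_i) rem Λ) ≤ B + deg Λ` for all `i`, every solution of the key equations lies in
`(Λg, Λf_1,…,Λf_ℓ)·F_q[x]`. -/
theorem decoder_success_of_SE_trivial {F : Type*} [Field F] [Fintype F] [DecidableEq F]
    (n ℓ : ℕ)
    (α : Fin n → F) (hα : Function.Injective α)
    (lam : Fin n → ℕ) (hlam : ∀ j, 0 < lam j)
    (M : F[X]) (hM : M = ∏ j, (X - C (α j)) ^ lam j)
    (L : ℕ) (hL : L = M.natDegree)
    (df dg t : ℕ) (hdf : 0 < df) (hdg : 0 < dg) (hsum : df + dg ≤ L + 1)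
    (B : ℤ) (hBdef : B = (df : ℤ) + dg + t - L - 2) (hB : B < 0)
    (f : Fin ℓ → F[X]) (g : F[X]) (hg : g ≠ 0)
    (hdegf : ∀ i, (f i).degree < (df : ℕ)) (hdegg : g.degree < (dg : ℕ))
    (hred : gcd (Finset.univ.gcd f) g = 1)
    (hgM : IsCoprime g M)
    (R E : Fin ℓ → F[X])
    -- received word `R = C + E`: `R_i ≡ f_i/g + E_i (mod M)`
    (hRE : ∀ i, M ∣ (g * R i - f i - g * E i))
    (Λ : F[X]) (hΛdvd : Λ ∣ M) (hΛt : Λ.natDegree ≤ t)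
    (Y : F[X]) (hY : Y = M / Λ)
    (hYE : ∀ i, Y ∣ E i)
    (hgcdE : gcd (Finset.univ.gcd (fun i => E i / Y)) Λ = 1)
    -- `S_E = {0}`
    (hSE : ∀ φ : F[X],
      (∀ i, DegLE ((g * φ * (E i / Y)) % Λ) (B + Λ.natDegree)) → Λ ∣ φ) :
    ∀ (φ : F[X]) (ψ : Fin ℓ → F[X]),
      (∀ i, M ∣ (φ * R i - ψ i)) →
      φ.degree < (dg + t : ℕ) → (∀ i, (ψ i).degree < (df + t : ℕ)) →
      ∃ p : F[X], φ = p * (Λ * g) ∧ ∀ i, ψ i = p * (Λ * f i) := by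
  intro φ ψ hkey hdegφ hdegψ
  -- basic nonvanishing facts
  have hMne : M ≠ 0 := by
    rw [hM]
    exact (monic_prod_of_monic _ _ fun j _ => (monic_X_sub_C (α j)).pow _).ne_zero
  have hΛne : Λ ≠ 0 := by rintro rfl; simp at hΛdvd; exact hMne hΛdvd
  have hMΛY : M = Λ * Y := by rw [hY]; exact (EuclideanDomain.mul_div_cancel' hΛne hΛdvd).symm
  have hYne : Y ≠ 0 := by rintro rfl; rw [mul_zero] at hMΛY; exact hMne hMΛY
  have hdegM : M.degree = (L : ℕ) := by rw [hL, degree_eq_natDegree hMne]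
  have hLsplit : Λ.natDegree + Y.natDegree = L := by
    rw [hL, hMΛY, natDegree_mul hΛne hYne]
  -- the defect δ i := g * ψ i - φ * f i
  set δ : Fin ℓ → F[X] := fun i => g * ψ i - φ * f i with hδ
  have hstep : ∀ i, M ∣ δ i - g * φ * E i := by
    intro i
    have h1 : M ∣ φ * (g * R i - f i - g * E i) := Dvd.dvd.mul_left (hRE i) φ
    have h2 : M ∣ g * (φ * R i - ψ i) := Dvd.dvd.mul_left (hkey i) g
    have : δ i - g * φ * E i = φ * (g * R i - f i - g * E i) - g * (φ * R i - ψ i) := by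
      rw [hδ]; ring
    rw [this]
    exact dvd_sub h1 h2
  -- degree bound on δ
  have hψnat : ∀ i, (ψ i).natDegree ≤ df + t - 1 := by
    intro i
    by_cases h : ψ i = 0
    · simp [h]
    · have := (natDegree_lt_iff_degree_lt h).mpr (hdegψ i)
      omega
  have hfnat : ∀ i, (f i).natDegree ≤ df - 1 := by
    intro i
    by_cases h : f i = 0
    · simp [h]
    · have := (natDegree_lt_iff_degree_lt h).mpr (hdegf i)
      omega
  have hgnat : g.natDegree ≤ dg - 1 := by
    have := (natDegree_lt_iff_degree_lt hg).mpr hdegg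
    omega
  have hφnat : φ.natDegree ≤ dg + t - 1 := by
    by_cases h : φ = 0
    · simp [h]
    · have := (natDegree_lt_iff_degree_lt h).mpr hdegφ
      omega
  have hδnat : ∀ i, (δ i).natDegree ≤ df + dg + t - 2 := by
    intro i
    have h1 := hψnat i
    have h2 := hfnat i
    refine le_trans (natDegree_sub_le _ _) (max_le ?_ ?_)
    · exact le_trans (natDegree_mul_le) (by omega)
    · exact le_trans (natDegree_mul_le) (by omega)
  -- B + L = df + dg + t - 2 ≥ 0 ; and df+dg+t-2 < L
  have hBL : (df : ℤ) + dg + t - 2 = B + L := by rw [hBdef]; ring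
  have hlt : df + dg + t - 2 < L := by
    have : (df : ℤ) + dg + t - 2 < L := by omega
    omega
  -- Y divides δ i
  have hYδ : ∀ i, Y ∣ δ i := by
    intro i
    have h1 : Y ∣ δ i - g * φ * E i := dvd_trans ⟨Λ, by rw [hMΛY]; ring⟩ (hstep i)
    have h2 : Y ∣ g * φ * E i := Dvd.dvd.mul_left (hYE i) _
    have := dvd_add h1 h2
    simpa using this
  -- ε i := δ i / Y
  set ε : Fin ℓ → F[X] := fun i => δ i / Y with hε
  have hδYε : ∀ i, δ i = Y * ε i := fun i =>
    (EuclideanDomain.mul_div_cancel' hYne (hYδ i)).symm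
  have hEY : ∀ i, E i = Y * (E i / Y) := fun i =>
    (EuclideanDomain.mul_div_cancel' hYne (hYE i)).symm
  -- Λ ∣ ε i - g φ E' i
  have hΛε : ∀ i, Λ ∣ g * φ * (E i / Y) - ε i := by
    intro i
    have h1 : Λ * Y ∣ Y * (ε i - g * φ * (E i / Y)) := by
      have := hstep i
      rw [hMΛY] at this
      have heq : δ i - g * φ * E i = Y * (ε i - g * φ * (E i / Y)) := by
        rw [hδYε i]
        conv_lhs => rw [hEY i]
        ring
      rwa [heq] at this
    rw [mul_comm Λ Y] at h1
    have h2 : Λ ∣ ε i - g * φ * (E i / Y) :=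
      (mul_dvd_mul_iff_left hYne).mp h1
    simpa using (dvd_neg.mpr h2)
  -- degree of ε i
  have hεdeg : ∀ i, ε i ≠ 0 → (ε i).natDegree + Y.natDegree ≤ df + dg + t - 2 := by
    intro i h
    have := hδnat i
    rw [hδYε i, natDegree_mul hYne h] at this
    omega
  -- ε i has degree < deg Λ
  have hεltΛ : ∀ i, (ε i).degree < Λ.degree := by
    intro i
    by_cases h : ε i = 0
    · rw [h, degree_zero]
      exact Ne.bot_lt (degree_ne_bot.mpr hΛne)
    · have h1 := hεdeg i h
      have h2 : (ε i).natDegree < Λ.natDegree := by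
        have hB2 : (df : ℤ) + dg + t - 2 - (L - Λ.natDegree) = B + Λ.natDegree := by
          rw [hBdef]; ring
        have hYn : Y.natDegree = L - Λ.natDegree := by omega
        have hΛL : Λ.natDegree ≤ L := by omega
        have : ((ε i).natDegree : ℤ) ≤ B + Λ.natDegree := by
          rw [← hB2]
          push_cast
          omega
        omega
      rw [degree_eq_natDegree h, degree_eq_natDegree hΛne]
      exact_mod_cast h2
  -- apply hSE
  have hΛφ : Λ ∣ φ := by
    apply hSE
    intro i
    have hmod : (g * φ * (E i / Y)) % Λ = ε i := mod_eq_of_dvd_sub' hΛne (hΛε i) (hεltΛ i)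
    rw [hmod]
    by_cases h : ε i = 0
    · rw [h]
      simp [DegLE]
    · have h1 := hεdeg i h
      have hB2 : (df : ℤ) + dg + t - 2 - (L - Λ.natDegree) = B + Λ.natDegree := by
        rw [hBdef]; ring
      have hΛL : Λ.natDegree ≤ L := by omega
      have h2 : ((ε i).natDegree : ℤ) ≤ B + Λ.natDegree := by
        rw [← hB2]; push_cast; omega
      rw [DegLE, degree_eq_natDegree h]
      simp only [Nat.cast_withBot, WithBot.map_coe, WithBot.coe_le_coe]
      exact h2
  obtain ⟨φ', hφ'⟩ := hΛφ
  -- now M ∣ δ i, and deg δ i < deg M, so δ i = 0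
  have hδ0 : ∀ i, δ i = 0 := by
    intro i
    have h1 : M ∣ δ i := by
      have := hstep i
      have h2 : M ∣ g * φ * E i := by
        rw [hφ', hEY i, hMΛY]
        exact ⟨g * φ' * (E i / Y), by ring⟩
      have := dvd_add this h2
      simpa using this
    refine Polynomial.eq_zero_of_dvd_of_degree_lt h1 ?_
    rw [hdegM]
    by_cases h : δ i = 0
    · rw [h, degree_zero]; exact WithBot.bot_lt_coe _
    · rw [degree_eq_natDegree h]
      exact_mod_cast lt_of_le_of_lt (hδnat i) hlt
  -- g * ψ i = Λ * φ' * f i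
  have hgψ : ∀ i, g * ψ i = Λ * (φ' * f i) := by
    intro i
    have := hδ0 i
    rw [hδ] at this
    have h2 : g * ψ i = φ * f i := by linear_combination this
    rw [h2, hφ']; ring
  -- g is coprime to Λ
  have hgΛ : IsCoprime g Λ := hgM.of_isCoprime_of_dvd_right hΛdvd
  -- g ∣ φ' * f i for each i
  have hgdvd : ∀ i, g ∣ φ' * f i := by
    intro i
    exact hgΛ.dvd_of_dvd_mul_left ⟨ψ i, (hgψ i).symm⟩
  -- g ∣ φ'
  have hgφ' : g ∣ φ' := by
    have h1 : g ∣ Finset.univ.gcd fun i => φ' * f i := Finset.dvd_gcd fun i _ => hgdvd i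
    rw [Finset.gcd_mul_left] at h1
    have hcop : IsCoprime (Finset.univ.gcd f) g := (gcd_isUnit_iff _ _).mp (by rw [hred]; exact isUnit_one)
    have h2 : g ∣ normalize φ' := hcop.symm.dvd_of_dvd_mul_right h1
    exact h2.trans (normalize_dvd_iff.mpr dvd_rfl)
  obtain ⟨p, hp⟩ := hgφ'
  refine ⟨p, ?_, ?_⟩
  · rw [hφ', hp]; ring
  · intro i
    have := hgψ i
    rw [hp] at this
    have h2 : g * ψ i = g * (p * (Λ * f i)) := by linear_combination this
    exact mul_left_cancel₀ hg h2
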